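/- Let j be an odd positive integer. Then for every integer l ≥ 1, 3 · Σ_{i odd, 1 ≤ i ≤ j} C(j,i)/(l + i) ≥ Σ_{i=0}^{j} C(j,i)/(l + i), and for l = 0, 3 · Σ_{i odd, 1 ≤ i ≤ j} C(j,i)/i ≥ Σ_{i=1}^{j} C(j,i)/i, where C(j,i) denotes the binomial coefficient. -/
import Mathlib
open Finset

lemma realstep (A B D x : ℝ) (hA : 0 < A) (hB : 0 < B) (hD : 0 < D)
    (h4 : B^2 ≤ 4*(A*D)) (hx : 2 ≤ x) : B / x ≤ A / (x-1) + D / (x+1) := by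
  have hx2 : (4:ℝ) ≤ x^2 := by nlinarith
  have hx21 : (0:ℝ) ≤ x^2 - 1 := by linarith
  have hT2 : (B*(x^2-1))^2 ≤ (A*x*(x+1) + D*x*(x-1))^2 := by
    linarith [mul_nonneg (sq_nonneg x) (sq_nonneg (A*(x+1) - D*(x-1))),
      mul_nonneg (sub_nonneg.2 h4) (mul_nonneg (sq_nonneg x) hx21),
      mul_nonneg (sq_nonneg B) hx21]
  have hSnn : 0 ≤ A*x*(x+1) + D*x*(x-1) :=
    add_nonneg (mul_nonneg (mul_nonneg hA.le (by linarith)) (by linarith))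
      (mul_nonneg (mul_nonneg hD.le (by linarith)) (by linarith))
  have hfin : B*(x^2-1) ≤ A*x*(x+1) + D*x*(x-1) :=
    le_of_pow_le_pow_left₀ (by norm_num) hSnn hT2
  have hd1 : (0:ℝ) < x - 1 := by linarith
  have hd2 : (0:ℝ) < x := by linarith
  have hd3 : (0:ℝ) < x + 1 := by linarith
  rw [div_add_div _ _ (ne_of_gt hd1) (ne_of_gt hd3),
    div_le_div_iff₀ hd2 (mul_pos hd1 hd3)]
  nlinarith [hfin]

lemma keylem (j i : ℕ) (c : ℝ) (hc : 0 ≤ c) (h2 : 2 ≤ i) (hij : i + 1 ≤ j) :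
    (j.choose i : ℝ) / (c + (i : ℝ)) ≤
      (j.choose (i-1) : ℝ) / (c + ((i-1 : ℕ) : ℝ)) +
      (j.choose (i+1) : ℝ) / (c + ((i+1 : ℕ) : ℝ)) := by
  have h1j : i - 1 ≤ j := by omega
  have hij' : i ≤ j := by omega
  have h1i : 1 ≤ i := by omega
  have hA : (0:ℝ) < (j.choose (i-1) : ℝ) := by exact_mod_cast Nat.choose_pos h1j
  have hB : (0:ℝ) < (j.choose i : ℝ) := by exact_mod_cast Nat.choose_pos hij'
  have hD : (0:ℝ) < (j.choose (i+1) : ℝ) := by exact_mod_cast Nat.choose_pos hij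
  have h1 : j.choose i * i = j.choose (i-1) * (j - (i-1)) := by
    have h := Nat.choose_succ_right_eq j (i-1)
    rw [show i - 1 + 1 = i from by omega] at h
    exact h
  have h2' : j.choose (i+1) * (i+1) = j.choose i * (j - i) := Nat.choose_succ_right_eq j i
  have hN : j.choose i * i * (j.choose i * (j - i)) =
      j.choose (i-1) * (j - (i-1)) * (j.choose (i+1) * (i+1)) := by
    rw [h1, ← h2']
  have hNr : (j.choose i : ℝ) * i * ((j.choose i : ℝ) * ((j:ℝ) - i)) =
      (j.choose (i-1) : ℝ) * ((j:ℝ) - ((i:ℝ) - 1)) * ((j.choose (i+1) : ℝ) * ((i:ℝ)+1)) := by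
    have := congrArg (Nat.cast : ℕ → ℝ) hN
    push_cast [Nat.cast_sub h1j, Nat.cast_sub hij', Nat.cast_sub h1i] at this
    linarith [this]
  have hi2 : (2:ℝ) ≤ (i:ℝ) := by exact_mod_cast h2
  have hv : (1:ℝ) ≤ (j:ℝ) - (i:ℝ) := by
    have : (i:ℝ) + 1 ≤ (j:ℝ) := by exact_mod_cast hij
    linarith
  have huv : (0:ℝ) < (i:ℝ) * ((j:ℝ) - (i:ℝ)) := mul_pos (by linarith) (by linarith)
  have hq : ((i:ℝ)+1)*(((j:ℝ)-(i:ℝ))+1) ≤ 4*((i:ℝ)*((j:ℝ)-(i:ℝ))) := by nlinarith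
  have h4 : (j.choose i : ℝ)^2 ≤ 4*((j.choose (i-1) : ℝ)*(j.choose (i+1) : ℝ)) := by
    nlinarith [hNr, huv, hq, mul_pos hA hD, sq_nonneg (j.choose i : ℝ)]
  have hcast1 : ((i-1 : ℕ) : ℝ) = (i:ℝ) - 1 := by push_cast [Nat.cast_sub h1i]; ring
  have hcast2 : ((i+1 : ℕ) : ℝ) = (i:ℝ) + 1 := by push_cast; ring
  rw [hcast1, hcast2]
  have hx : (2:ℝ) ≤ c + (i:ℝ) := by linarith
  have := realstep _ _ _ (c + (i:ℝ)) hA hB hD h4 hx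
  have e1 : c + ((i:ℝ) - 1) = c + (i:ℝ) - 1 := by ring
  have e2 : c + ((i:ℝ) + 1) = c + (i:ℝ) + 1 := by ring
  rw [e1, e2]
  exact this
open Finset

lemma evenLe (j : ℕ) (hodd : Odd j) (f : ℕ → ℝ) (hf : ∀ i, 0 ≤ f i)
    (h01 : f 0 ≤ f 1)
    (hmid : ∀ i, 2 ≤ i → i + 1 ≤ j → f i ≤ f (i-1) + f (i+1)) :
    f 0 + ∑ i ∈ (Icc 1 j).filter (fun i => ¬ Odd i), f i ≤
      2 * ∑ i ∈ (Icc 1 j).filter (fun i => Odd i), f i := by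
  have hj1 : 1 ≤ j := hodd.pos
  set Ef := (Icc 1 j).filter (fun i => ¬ Odd i) with hEf
  set Of := (Icc 1 j).filter (fun i => Odd i) with hOf
  have hmem : ∀ i ∈ Ef, 2 ≤ i ∧ i + 1 ≤ j ∧ ¬ Odd i := by
    intro i hi
    rw [hEf, mem_filter, mem_Icc] at hi
    rcases hodd with ⟨k, hk⟩
    refine ⟨?_, ?_, hi.2⟩ <;>
    · rcases Nat.even_or_odd i with he | ho
      · rcases he with ⟨m, hm⟩; omega
      · exact absurd ho hi.2
  have h1mem : 1 ∈ Of := by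
    rw [hOf, mem_filter, mem_Icc]; exact ⟨⟨le_refl 1, hj1⟩, odd_one⟩
  have hsum : ∑ i ∈ Ef, f i ≤ ∑ i ∈ Ef, f (i-1) + ∑ i ∈ Ef, f (i+1) := by
    rw [← Finset.sum_add_distrib]
    exact Finset.sum_le_sum fun i hi => hmid i (hmem i hi).1 (hmem i hi).2.1
  have hminus : ∑ i ∈ Ef, f (i-1) ≤ ∑ i ∈ Of, f i := by
    rw [show ∑ i ∈ Ef, f (i-1) = ∑ m ∈ Ef.image (· - 1), f m from
      (Finset.sum_image (fun x hx y hy h => by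
        have := (hmem x hx).1; have := (hmem y hy).1; omega)).symm]
    apply Finset.sum_le_sum_of_subset_of_nonneg
    · intro m hm
      rw [mem_image] at hm
      obtain ⟨i, hi, rfl⟩ := hm
      obtain ⟨h2i, hij, hni⟩ := hmem i hi
      rw [hOf, mem_filter, mem_Icc]
      rw [Nat.odd_iff] at hni ⊢
      omega
    · intro m _ _; exact hf m
  have hplus : ∑ i ∈ Ef, f (i+1) ≤ ∑ i ∈ Of, f i - f 1 := by
    rw [show ∑ i ∈ Ef, f (i+1) = ∑ m ∈ Ef.image (· + 1), f m from
      (Finset.sum_image (fun x hx y hy h => by omega)).symm]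
    rw [← Finset.sum_erase_eq_sub h1mem]
    apply Finset.sum_le_sum_of_subset_of_nonneg
    · intro m hm
      rw [mem_image] at hm
      obtain ⟨i, hi, rfl⟩ := hm
      obtain ⟨h2i, hij, hni⟩ := hmem i hi
      rw [mem_erase, hOf, mem_filter, mem_Icc]
      rw [Nat.odd_iff] at hni ⊢
      omega
    · intro m _ _; exact hf m
  linarith [hsum, hminus, hplus, h01]
open Finset

section helpers

lemma split_range (j : ℕ) (hj : 1 ≤ j) (f : ℕ → ℝ) :
    ∑ i ∈ Finset.range (j+1), f i = f 0 + (∑ i ∈ (Icc 1 j).filter (fun i => Odd i), f i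
      + ∑ i ∈ (Icc 1 j).filter (fun i => ¬ Odd i), f i) := by
  have h : Finset.range (j+1) = insert 0 (Icc 1 j) := by
    ext i; simp [Finset.mem_range, Finset.mem_Icc]; omega
  rw [h, Finset.sum_insert (by simp), Finset.sum_filter_add_sum_filter_not]

lemma split_Icc (j : ℕ) (f : ℕ → ℝ) :
    ∑ i ∈ Icc 1 j, f i = ∑ i ∈ (Icc 1 j).filter (fun i => Odd i), f i
      + ∑ i ∈ (Icc 1 j).filter (fun i => ¬ Odd i), f i := by
  rw [Finset.sum_filter_add_sum_filter_not]

end helpers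

theorem statement10 (j : ℕ) (hj : 0 < j) (hodd : Odd j) :
    (∀ l : ℕ, 1 ≤ l →
        ∑ i ∈ Finset.range (j + 1), (j.choose i : ℝ) / ((l : ℝ) + (i : ℝ)) ≤
          3 * ∑ i ∈ (Finset.Icc 1 j).filter (fun i => Odd i),
            (j.choose i : ℝ) / ((l : ℝ) + (i : ℝ))) ∧
      ∑ i ∈ Finset.Icc 1 j, (j.choose i : ℝ) / (i : ℝ) ≤
        3 * ∑ i ∈ (Finset.Icc 1 j).filter (fun i => Odd i), (j.choose i : ℝ) / (i : ℝ) := by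
  constructor
  · intro l hl
    have hl1 : (1:ℝ) ≤ (l:ℝ) := by exact_mod_cast hl
    rcases eq_or_ne j 1 with rfl | hj1
    · have hfil : (Icc 1 1).filter (fun i => Odd i) = {1} := by decide
      rw [hfil]
      simp [Finset.sum_range_succ, Nat.choose]
      have h0 : (0:ℝ) < (l:ℝ) := by linarith
      have h1 : (0:ℝ) < (l:ℝ) + 1 := by linarith
      have e0 : ((l:ℝ))⁻¹ * (l:ℝ) = 1 := inv_mul_cancel₀ (ne_of_gt h0)
      have e1 : ((l:ℝ)+1)⁻¹ * ((l:ℝ)+1) = 1 := inv_mul_cancel₀ (ne_of_gt h1)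
      nlinarith [e0, e1, inv_nonneg.2 h0.le, inv_nonneg.2 h1.le, hl1]
    · have hj3 : 3 ≤ j := by
        rcases hodd with ⟨k, hk⟩; omega
      set f : ℕ → ℝ := fun i => (j.choose i : ℝ) / ((l : ℝ) + (i : ℝ)) with hfdef
      have hf : ∀ i, 0 ≤ f i := by
        intro i; rw [hfdef]
        apply div_nonneg (Nat.cast_nonneg _)
        positivity
      have h01 : f 0 ≤ f 1 := by
        rw [hfdef]
        simp only [Nat.choose_zero_right, Nat.choose_one_right, Nat.cast_zero, Nat.cast_one,
          add_zero, Nat.cast_ofNat]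
        rw [div_le_div_iff₀ (by linarith) (by linarith)]
        have hj3r : (3:ℝ) ≤ (j:ℝ) := by exact_mod_cast hj3
        nlinarith
      have hmid : ∀ i, 2 ≤ i → i + 1 ≤ j → f i ≤ f (i-1) + f (i+1) := by
        intro i h2 hij
        exact keylem j i (l:ℝ) (by linarith) h2 hij
      have := evenLe j hodd f hf h01 hmid
      rw [split_range j (by omega) f]
      linarith [this]
  · set f : ℕ → ℝ := fun i => (j.choose i : ℝ) / ((i : ℝ)) with hfdef
    have hf : ∀ i, 0 ≤ f i := by
      intro i; exact div_nonneg (Nat.cast_nonneg _) (Nat.cast_nonneg _)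
    have h01 : f 0 ≤ f 1 := by
      rw [hfdef]; norm_num
    have hmid : ∀ i, 2 ≤ i → i + 1 ≤ j → f i ≤ f (i-1) + f (i+1) := by
      intro i h2 hij
      have := keylem j i 0 le_rfl h2 hij
      simpa [hfdef] using this
    have := evenLe j hodd f hf h01 hmid
    rw [split_Icc j f]
    have hf0 : f 0 = 0 := by rw [hfdef]; norm_num
    linarith [this, hf 0]
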